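/- Suppose the distribution functions f₋₁, f₀, f₁ : ℤ × ℕ → ℝ satisfy the MRT-LB evolution equations for all j ∈ ℤ and n ∈ ℕ, and let φⱼⁿ be the associated macroscopic variable. Then for every j ∈ ℤ and every n ≥ 2, the macroscopic variable satisfies the explicit four-level finite-difference scheme φⱼⁿ⁺¹ = α₁φⱼ₋₁ⁿ + α₂φⱼⁿ + α₁φⱼ₊₁ⁿ + β₁φⱼ₋₁ⁿ⁻¹ + β₂φⱼⁿ⁻¹ + β₁φⱼ₊₁ⁿ⁻¹ + γφⱼⁿ⁻² + s₁s₂·Δt·R, where α₁ = 1 − s₁/2 − ω₀s₂/2, α₂ = (ω₀−1)s₂ + 1, β₁ = ω₀s₁s₂/2 − s₁s₂/2 − ω₀s₂/2 + s₁/2 + s₂ − 1, β₂ = −ω₀s₁s₂ + ω₀s₂ + s₁ − 1, γ = (s₁−1)(s₂−1). -/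
import Mathlib
set_option maxHeartbeats 2000000


/-- The MRT-LB evolution equations imply the explicit four-level
finite-difference scheme for the macroscopic variable `φ`. -/
theorem mrt_lb_four_level_scheme
    (Δt R ω₀ s₁ s₂ : ℝ) (hΔt : 0 < Δt)
    (fm f0 f1 : ℤ → ℕ → ℝ) (φ : ℤ → ℕ → ℝ) (ω₁ : ℝ)
    (hω₁ : ω₁ = (1 - ω₀) / 2)
    (hφ : ∀ (j : ℤ) (n : ℕ),
      φ j n = fm j n + f0 j n + f1 j n + (Δt / 2) * R)
    (hevm : ∀ (j : ℤ) (n : ℕ), fm j (n + 1) =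
      fm (j + 1) n - (s₁ / 2) * (fm (j + 1) n - f1 (j + 1) n)
        + (s₂ / 2) * f0 (j + 1) n - (ω₀ * s₂ / 2) * φ (j + 1) n
        + (ω₁ + ω₀ * s₂ / 4) * Δt * R)
    (hev0 : ∀ (j : ℤ) (n : ℕ), f0 j (n + 1) =
      (1 - s₂) * f0 j n + ω₀ * s₂ * φ j n + ω₀ * (1 - s₂ / 2) * Δt * R)
    (hevp : ∀ (j : ℤ) (n : ℕ), f1 j (n + 1) =
      f1 (j - 1) n + (s₁ / 2) * (fm (j - 1) n - f1 (j - 1) n)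
        + (s₂ / 2) * f0 (j - 1) n - (ω₀ * s₂ / 2) * φ (j - 1) n
        + (ω₁ + ω₀ * s₂ / 4) * Δt * R) :
    ∀ (j : ℤ) (n : ℕ), 2 ≤ n →
      φ j (n + 1) =
        (1 - s₁ / 2 - ω₀ * s₂ / 2) * φ (j - 1) n
        + ((ω₀ - 1) * s₂ + 1) * φ j n
        + (1 - s₁ / 2 - ω₀ * s₂ / 2) * φ (j + 1) n
        + (ω₀ * s₁ * s₂ / 2 - s₁ * s₂ / 2 - ω₀ * s₂ / 2 + s₁ / 2 + s₂ - 1) *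
            φ (j - 1) (n - 1)
        + (-(ω₀ * s₁ * s₂) + ω₀ * s₂ + s₁ - 1) * φ j (n - 1)
        + (ω₀ * s₁ * s₂ / 2 - s₁ * s₂ / 2 - ω₀ * s₂ / 2 + s₁ / 2 + s₂ - 1) *
            φ (j + 1) (n - 1)
        + (s₁ - 1) * (s₂ - 1) * φ j (n - 2)
        + s₁ * s₂ * Δt * R := by
  intro j n hn
  obtain ⟨m, rfl⟩ : ∃ m, n = m + 2 := ⟨n - 2, by omega⟩
  subst hω₁
  simp only [show m + 2 - 1 = m + 1 from rfl, show m + 2 - 2 = m from rfl,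
    show ∀ k : ℕ, k + 3 = k + 2 + 1 from fun _ => rfl,
    show ∀ k : ℕ, k + 2 = k + 1 + 1 from fun _ => rfl]
  simp only [hφ, hevm, hev0, hevp, add_sub_cancel_right, sub_add_cancel]
  ring
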